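/- Let f : ℝ^d → ℝ be ℓ-gradient Lipschitz, let 0 < η ≤ 1/ℓ, and let x_{t+1} = x_t − η∇f(x_t) be the gradient descent sequence. Then for any t ≥ τ > 0: ‖x_τ − x₀‖ ≤ √(2ηt·(f(x₀) − f(x_t))). -/

import Mathlib

open scoped RealInnerProductSpace

open intervalIntegral Finset in
lemma gd_descent_aux {d : ℕ} {f : EuclideanSpace ℝ (Fin d) → ℝ} {ℓ : ℝ}
    (hℓ : 0 < ℓ)
    (hdiff : Differentiable ℝ f)
    (hlip : ∀ x y : EuclideanSpace ℝ (Fin d),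
      ‖gradient f x - gradient f y‖ ≤ ℓ * ‖x - y‖)
    (x y : EuclideanSpace ℝ (Fin d)) :
    f y ≤ f x + (inner ℝ (gradient f x) (y - x) : ℝ) + ℓ / 2 * ‖y - x‖ ^ 2 := by
  set v := y - x with hv
  have hcontg : Continuous (gradient f) := by
    have : LipschitzWith ℓ.toNNReal (gradient f) := by
      apply LipschitzWith.of_dist_le_mul
      intro a b
      simpa [dist_eq_norm, Real.coe_toNNReal ℓ hℓ.le] using hlip a b
    exact this.continuous
  have hline : Continuous (fun s : ℝ => x + s • v) := by continuity
  have hderiv : ∀ s : ℝ, HasDerivAt (fun s : ℝ => f (x + s • v))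
      ((inner ℝ (gradient f (x + s • v)) v : ℝ)) s := by
    intro s
    have h1 : HasDerivAt (fun s : ℝ => x + s • v) v s := by
      simpa using ((hasDerivAt_id s).smul_const v).const_add x
    have h2 := ((hdiff (x + s • v)).hasGradientAt.hasFDerivAt).comp_hasDerivAt s h1
    exact h2
  have hcont : Continuous (fun s : ℝ => (inner ℝ (gradient f (x + s • v)) v : ℝ)) :=
    (hcontg.comp hline).inner continuous_const
  have hFTC : f y - f x = ∫ s in (0:ℝ)..1, (inner ℝ (gradient f (x + s • v)) v : ℝ) := by
    have := intervalIntegral.integral_eq_sub_of_hasDerivAt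
      (f := fun s : ℝ => f (x + s • v)) (a := (0:ℝ)) (b := 1)
      (fun s _ => hderiv s) (hcont.intervalIntegrable 0 1)
    simp only [one_smul, zero_smul, add_zero] at this
    rw [this]; congr 1 <;> simp [hv]
  have hmono : (∫ s in (0:ℝ)..1, (inner ℝ (gradient f (x + s • v)) v : ℝ))
      ≤ ∫ s in (0:ℝ)..1, ((inner ℝ (gradient f x) v : ℝ) + ℓ * ‖v‖ ^ 2 * s) := by
    apply intervalIntegral.integral_mono_on (by norm_num)
      (hcont.intervalIntegrable 0 1)
      ((by fun_prop : Continuous fun s : ℝ => (inner ℝ (gradient f x) v : ℝ) + ℓ * ‖v‖ ^ 2 * s).intervalIntegrable 0 1)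
    intro s hs
    have hs0 : 0 ≤ s := hs.1
    have key : (inner ℝ (gradient f (x + s • v) - gradient f x) v : ℝ) ≤ ℓ * ‖v‖ ^ 2 * s := by
      calc (inner ℝ (gradient f (x + s • v) - gradient f x) v : ℝ)
          ≤ ‖gradient f (x + s • v) - gradient f x‖ * ‖v‖ := real_inner_le_norm _ _
        _ ≤ (ℓ * ‖x + s • v - x‖) * ‖v‖ := by
            gcongr; exact hlip _ _
        _ = ℓ * ‖v‖ ^ 2 * s := by
            have : x + s • v - x = s • v := by abel
            rw [this, norm_smul, Real.norm_eq_abs, abs_of_nonneg hs0]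
            ring
    have := inner_sub_left (𝕜 := ℝ) (gradient f (x + s • v)) (gradient f x) v
    linarith [key, this.symm.le, this.le]
  have hrhs : (∫ s in (0:ℝ)..1, ((inner ℝ (gradient f x) v : ℝ) + ℓ * ‖v‖ ^ 2 * s))
      = (inner ℝ (gradient f x) v : ℝ) + ℓ / 2 * ‖v‖ ^ 2 := by
    rw [intervalIntegral.integral_add (intervalIntegrable_const)
      ((by fun_prop : Continuous fun s : ℝ => ℓ * ‖v‖ ^ 2 * s).intervalIntegrable 0 1),
      intervalIntegral.integral_const_mul]
    simp [integral_id]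
    ring
  linarith [hFTC, hmono, hrhs]

/-- **Improve or Localize.** For an `ℓ`-gradient-Lipschitz `f` and step size
`0 < η ≤ 1/ℓ`, the gradient descent iterates satisfy, for any `t ≥ τ > 0`:
`‖x τ - x 0‖ ≤ √(2 η t (f (x 0) - f (x t)))`. -/
theorem gd_improve_or_localize
    (d : ℕ) (f : EuclideanSpace ℝ (Fin d) → ℝ) (ℓ η : ℝ)
    (hℓ : 0 < ℓ) (hη : 0 < η) (hηℓ : η ≤ 1 / ℓ)
    (hdiff : Differentiable ℝ f)
    (hlip : ∀ x y : EuclideanSpace ℝ (Fin d),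
      ‖gradient f x - gradient f y‖ ≤ ℓ * ‖x - y‖)
    (x : ℕ → EuclideanSpace ℝ (Fin d))
    (hgd : ∀ t : ℕ, x (t + 1) = x t - η • gradient f (x t)) :
    ∀ t τ : ℕ, 0 < τ → τ ≤ t →
      ‖x τ - x 0‖ ≤ Real.sqrt (2 * η * t * (f (x 0) - f (x t))) := by
  have hℓη : ℓ * η ≤ 1 := by
    rw [le_div_iff₀ hℓ] at hηℓ; linarith
  have step : ∀ k, f (x (k + 1)) ≤ f (x k) - η / 2 * ‖gradient f (x k)‖ ^ 2 := by
    intro k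
    have h := gd_descent_aux hℓ hdiff hlip (x k) (x (k + 1))
    have hsub : x (k + 1) - x k = (-η) • gradient f (x k) := by
      rw [hgd k]; module
    rw [hsub, real_inner_smul_right, real_inner_self_eq_norm_sq, norm_smul,
      Real.norm_eq_abs, abs_neg, abs_of_pos hη, mul_pow] at h
    nlinarith [mul_nonneg (mul_nonneg (sub_nonneg.2 hℓη) hη.le) (sq_nonneg ‖gradient f (x k)‖)]
  have hsum : ∀ n, η / 2 * ∑ k ∈ Finset.range n, ‖gradient f (x k)‖ ^ 2
      ≤ f (x 0) - f (x n) := by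
    intro n
    induction n with
    | zero => simp
    | succ n ih =>
      rw [Finset.sum_range_succ]
      have := step n
      linarith
  have hmono : ∀ a b : ℕ, a ≤ b → f (x b) ≤ f (x a) := by
    intro a b hab
    induction b, hab using Nat.le_induction with
    | base => exact le_rfl
    | succ n hn ih =>
      have := step n
      nlinarith [sq_nonneg ‖gradient f (x n)‖]
  intro t τ hτ hτt
  set S1 := ∑ k ∈ Finset.range τ, ‖gradient f (x k)‖ with hS1
  set S2 := ∑ k ∈ Finset.range τ, ‖gradient f (x k)‖ ^ 2 with hS2
  have hS1nn : 0 ≤ S1 := Finset.sum_nonneg fun _ _ => norm_nonneg _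
  have hS2nn : 0 ≤ S2 := Finset.sum_nonneg fun _ _ => sq_nonneg _
  have h1 : ‖x τ - x 0‖ ≤ η * S1 := by
    have hd := dist_le_range_sum_dist x τ
    have heq : ∀ i, dist (x i) (x (i + 1)) = η * ‖gradient f (x i)‖ := by
      intro i
      rw [dist_eq_norm, hgd i]
      have : x i - (x i - η • gradient f (x i)) = η • gradient f (x i) := by abel
      rw [this, norm_smul, Real.norm_eq_abs, abs_of_pos hη]
    rw [norm_sub_rev, ← dist_eq_norm]
    calc dist (x 0) (x τ) ≤ ∑ i ∈ Finset.range τ, dist (x i) (x (i + 1)) := hd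
      _ = η * S1 := by rw [hS1, Finset.mul_sum]; exact Finset.sum_congr rfl fun i _ => heq i
  have h2 : S1 ^ 2 ≤ τ * S2 := by
    simpa using sq_sum_le_card_mul_sum_sq (s := Finset.range τ)
      (f := fun k => ‖gradient f (x k)‖)
  have h3 : η / 2 * S2 ≤ f (x 0) - f (x τ) := hsum τ
  have h4 : f (x t) ≤ f (x τ) := hmono τ t hτt
  have hτt' : (τ : ℝ) ≤ (t : ℝ) := Nat.cast_le.mpr hτt
  rw [show ‖x τ - x 0‖ = ‖x τ - x 0‖ from rfl, ← Real.sqrt_sq (norm_nonneg (x τ - x 0))]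
  apply Real.sqrt_le_sqrt
  have hnorm : ‖x τ - x 0‖ ^ 2 ≤ η ^ 2 * S1 ^ 2 := by
    rw [← mul_pow]; exact pow_le_pow_left₀ (norm_nonneg _) h1 2
  have hf0τ : 0 ≤ f (x 0) - f (x τ) := le_trans (by positivity) h3
  have hτnn : (0:ℝ) ≤ (τ : ℝ) := Nat.cast_nonneg τ
  calc ‖x τ - x 0‖ ^ 2 ≤ η ^ 2 * S1 ^ 2 := hnorm
    _ ≤ η ^ 2 * (τ * S2) := mul_le_mul_of_nonneg_left h2 (sq_nonneg η)
    _ = (η * τ) * (η * S2) := by ring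
    _ ≤ (η * τ) * (2 * (f (x 0) - f (x τ))) :=
        mul_le_mul_of_nonneg_left (by linarith) (by positivity)
    _ = 2 * η * τ * (f (x 0) - f (x τ)) := by ring
    _ ≤ 2 * η * t * (f (x 0) - f (x t)) := by
        apply mul_le_mul (by nlinarith) (by linarith) hf0τ (by positivity)
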